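/- Let T be an invertible continuous linear operator on a Banach space X with a direct sum decomposition X = M ⊕ N into closed subspaces with T(M) ⊆ M and T^{-1}(N) ⊆ N, such that ‖T y‖ ≥ 2‖y‖ for all y ∈ M and ‖T^{-1} z‖ ≥ 2‖z‖ for all z ∈ N, and suppose there is c > 0 such that the projections onto T^k(M) along T^k(N) and onto T^k(N) along T^k(M) are bounded by c uniformly in k ∈ ℤ. Then every periodic δ-pseudotrajectory (x_j)_{j∈ℤ} of T with δ := ε/(12c) satisfies ‖x_j‖ < ε for all j; in particular T has the periodic shadowing property. -/

import Mathlib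

private lemma stmt12_growth (u : ℕ → ℝ) (C K : ℝ) (hK : 0 ≤ K) (hbd : ∀ n, u n ≤ C)
    (hstep : ∀ n, 2 * u n - K ≤ u (n + 1)) : u 0 ≤ K := by
  by_contra h
  push_neg at h
  have key : ∀ n : ℕ, 2 ^ n * (u 0 - K) ≤ u n - K := by
    intro n
    induction n with
    | zero => simp
    | succ n ih =>
      have h2 : 2 * (u n - K) ≤ u (n + 1) - K := by linarith [hstep n]
      calc 2 ^ (n + 1) * (u 0 - K) = 2 * (2 ^ n * (u 0 - K)) := by ring
        _ ≤ 2 * (u n - K) := by nlinarith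
        _ ≤ u (n + 1) - K := h2
  obtain ⟨n, hn⟩ := pow_unbounded_of_one_lt ((C - K) / (u 0 - K)) (one_lt_two (α := ℝ))
  have h3 := key n
  have h4 : u n - K ≤ C - K := by linarith [hbd n]
  have h5 : (C - K) / (u 0 - K) * (u 0 - K) < 2 ^ n * (u 0 - K) :=
    mul_lt_mul_of_pos_right hn (by linarith)
  rw [div_mul_cancel₀] at h5
  · linarith
  · intro h0; linarith [h0]

/-- Uniformly positively expansive splitting implies that periodic pseudotrajectories stay
near 0; in particular such operators have the periodic shadowing property. -/
theorem stmt12 {𝕜 X : Type*} [NontriviallyNormedField 𝕜] [NormedAddCommGroup X]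
    [NormedSpace 𝕜 X] [CompleteSpace X]
    (T : X ≃L[𝕜] X) (M N : Submodule 𝕜 X)
    (hMc : IsClosed (M : Set X)) (hNc : IsClosed (N : Set X)) (hcompl : IsCompl M N)
    (hTM : ∀ x ∈ M, T x ∈ M) (hTN : ∀ x ∈ N, T.symm x ∈ N)
    (hexpM : ∀ y ∈ M, 2 * ‖y‖ ≤ ‖T y‖) (hexpN : ∀ z ∈ N, 2 * ‖z‖ ≤ ‖T.symm z‖)
    (c : ℝ) (hc : 0 < c)
    (hdec : ∀ (k : ℤ) (x : X), ∃! ab : X × X,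
        ab.1 ∈ ⇑(T ^ k) '' (M : Set X) ∧ ab.2 ∈ ⇑(T ^ k) '' (N : Set X) ∧ x = ab.1 + ab.2)
    (hbound : ∀ (k : ℤ) (x a b : X), a ∈ ⇑(T ^ k) '' (M : Set X) →
        b ∈ ⇑(T ^ k) '' (N : Set X) → x = a + b → ‖a‖ ≤ c * ‖x‖ ∧ ‖b‖ ≤ c * ‖x‖) :
    (∀ ε > (0 : ℝ), ∀ x : ℤ → X,
        (∀ j : ℤ, ‖T (x j) - x (j + 1)‖ ≤ ε / (12 * c)) →
        (∃ p : ℕ, 0 < p ∧ ∀ j : ℤ, x (j + p) = x j) →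
        ∀ j : ℤ, ‖x j‖ < ε) ∧
    (∀ ε > (0 : ℝ), ∃ δ > (0 : ℝ), ∀ x : ℤ → X,
        (∀ j : ℤ, ‖T (x j) - x (j + 1)‖ ≤ δ) →
        (∃ p : ℕ, 0 < p ∧ ∀ j : ℤ, x (j + p) = x j) →
        ∃ (y : X) (p : ℕ), 0 < p ∧ (∀ j : ℤ, x (j + p) = x j) ∧ (⇑T)^[p] y = y ∧
          ∀ j : ℤ, ‖x j - (T ^ j) y‖ < ε) := by
  -- helper lemmas about images
  have himg_add : ∀ (k : ℤ) (W : Submodule 𝕜 X) (u v : X),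
      u ∈ ⇑(T ^ k) '' (W : Set X) → v ∈ ⇑(T ^ k) '' (W : Set X) →
      u + v ∈ ⇑(T ^ k) '' (W : Set X) := by
    rintro k W u v ⟨a, ha, rfl⟩ ⟨b, hb, rfl⟩
    exact ⟨a + b, W.add_mem ha hb, map_add _ a b⟩
  have himg_T : ∀ (k : ℤ) (W : Submodule 𝕜 X) (u : X),
      u ∈ ⇑(T ^ k) '' (W : Set X) → T u ∈ ⇑(T ^ (k + 1)) '' (W : Set X) := by
    rintro k W u ⟨a, ha, rfl⟩
    refine ⟨a, ha, ?_⟩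
    rw [show k + 1 = 1 + k by ring, zpow_add, zpow_one]; rfl
  have hMk : ∀ (n : ℕ) (m : X), m ∈ M → (T ^ (n : ℤ)) m ∈ M := by
    intro n
    induction n with
    | zero => intro m hm; simp only [Nat.cast_zero, zpow_zero]; exact hm
    | succ n ih =>
      intro m hm
      rw [show ((n + 1 : ℕ) : ℤ) = (n : ℤ) + 1 by push_cast; ring, zpow_add_one]
      exact ih (T m) (hTM m hm)
  have hNk : ∀ (n : ℕ) (z : X), z ∈ N → (T ^ (-(n : ℤ))) z ∈ N := by
    intro n
    induction n with
    | zero => intro z hz; simp only [Nat.cast_zero, neg_zero, zpow_zero]; exact hz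
    | succ n ih =>
      intro z hz
      rw [show (-((n + 1 : ℕ) : ℤ)) = -(n : ℤ) - 1 by push_cast; ring, zpow_sub_one]
      exact ih (T.symm z) (hTN z hz)
  have hMmem : ∀ (k : ℤ), 0 ≤ k → ∀ u ∈ ⇑(T ^ k) '' (M : Set X), u ∈ M := by
    intro k hk u hu
    obtain ⟨m, hm, rfl⟩ := hu
    lift k to ℕ using hk
    exact hMk k m hm
  have hNmem : ∀ (k : ℤ), k ≤ 0 → ∀ u ∈ ⇑(T ^ k) '' (N : Set X), u ∈ N := by
    intro k hk u hu
    obtain ⟨z, hz, rfl⟩ := hu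
    obtain ⟨n, rfl⟩ : ∃ n : ℕ, k = -(n : ℤ) := ⟨(-k).toNat, by omega⟩
    exact hNk n z hz
  have main : ∀ ε > (0 : ℝ), ∀ x : ℤ → X,
      (∀ j : ℤ, ‖T (x j) - x (j + 1)‖ ≤ ε / (12 * c)) →
      (∃ p : ℕ, 0 < p ∧ ∀ j : ℤ, x (j + p) = x j) →
      ∀ j : ℤ, ‖x j‖ < ε := by
    intro ε hε x hx hpp j0
    obtain ⟨p, hp, hper⟩ := hpp
    set δ : ℝ := ε / (12 * c) with hδdef
    have hδ : 0 < δ := by positivity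
    -- a uniform bound on the pseudotrajectory, from periodicity
    have hpne : (Finset.range p).Nonempty := Finset.nonempty_range_iff.mpr hp.ne'
    set S : ℝ := (Finset.range p).sup' hpne (fun i => ‖x (i : ℤ)‖) with hSdef
    have hSb : ∀ j : ℤ, ‖x j‖ ≤ S := by
      intro j
      have hperiodic : Function.Periodic x (p : ℤ) := hper
      have h1 := (hperiodic.zsmul (j / (p : ℤ))) (j % (p : ℤ))
      simp only [smul_eq_mul] at h1
      rw [Int.emod_add_ediv_mul] at h1
      have hple : (0 : ℤ) < (p : ℤ) := by exact_mod_cast hp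
      have h0le : 0 ≤ j % (p : ℤ) := Int.emod_nonneg j (by omega)
      have hlt : j % (p : ℤ) < (p : ℤ) := Int.emod_lt_of_pos j hple
      have hmem : (j % (p : ℤ)).toNat ∈ Finset.range p := by
        rw [Finset.mem_range]; omega
      have h2 := Finset.le_sup' (fun i : ℕ => ‖x (i : ℤ)‖) hmem
      rw [Int.toNat_of_nonneg h0le] at h2
      rw [h1]
      exact h2
    have hS0 : 0 ≤ S := le_trans (norm_nonneg _) (hSb 0)
    -- choose the decompositions at moving levels
    choose ab hab1 hab2 hab3 using fun j : ℤ => (hdec (j - j0) (x j)).exists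
    have habd : ∀ j : ℤ, ‖(ab j).1‖ ≤ c * S ∧ ‖(ab j).2‖ ≤ c * S := by
      intro j
      obtain ⟨h1, h2⟩ := hbound (j - j0) (x j) (ab j).1 (ab j).2 (hab1 j) (hab2 j) (hab3 j)
      have h3 : c * ‖x j‖ ≤ c * S := mul_le_mul_of_nonneg_left (hSb j) hc.le
      exact ⟨h1.trans h3, h2.trans h3⟩
    -- the fundamental recursion estimate
    have hrec : ∀ j : ℤ, ‖(ab (j + 1)).1 - T ((ab j).1)‖ ≤ c * δ ∧
        ‖(ab (j + 1)).2 - T ((ab j).2)‖ ≤ c * δ := by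
      intro j
      obtain ⟨PQ, hP, hQ, hsum⟩ := (hdec ((j + 1) - j0) (x (j + 1) - T (x j))).exists
      obtain ⟨hPb, hQb⟩ := hbound ((j + 1) - j0) (x (j + 1) - T (x j)) PQ.1 PQ.2 hP hQ hsum
      have he : ‖x (j + 1) - T (x j)‖ ≤ δ := by rw [norm_sub_rev]; exact hx j
      have hPb' : ‖PQ.1‖ ≤ c * δ := hPb.trans (mul_le_mul_of_nonneg_left he hc.le)
      have hQb' : ‖PQ.2‖ ≤ c * δ := hQb.trans (mul_le_mul_of_nonneg_left he hc.le)
      have hmem1 : T ((ab j).1) + PQ.1 ∈ ⇑(T ^ ((j + 1) - j0)) '' (M : Set X) := by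
        apply himg_add
        · have h := himg_T (j - j0) M _ (hab1 j)
          rwa [show j - j0 + 1 = (j + 1) - j0 by ring] at h
        · exact hP
      have hmem2 : T ((ab j).2) + PQ.2 ∈ ⇑(T ^ ((j + 1) - j0)) '' (N : Set X) := by
        apply himg_add
        · have h := himg_T (j - j0) N _ (hab2 j)
          rwa [show j - j0 + 1 = (j + 1) - j0 by ring] at h
        · exact hQ
      have hsum2 : x (j + 1) = (T ((ab j).1) + PQ.1) + (T ((ab j).2) + PQ.2) := by
        calc x (j + 1) = T ((ab j).1 + (ab j).2) + (x (j + 1) - T (x j)) := by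
              rw [← hab3 j]; abel
          _ = T ((ab j).1 + (ab j).2) + (PQ.1 + PQ.2) := by rw [← hsum]
          _ = (T ((ab j).1) + PQ.1) + (T ((ab j).2) + PQ.2) := by rw [map_add]; abel
      have huniq : ab (j + 1) = (T ((ab j).1) + PQ.1, T ((ab j).2) + PQ.2) :=
        (hdec ((j + 1) - j0) (x (j + 1))).unique ⟨hab1 (j + 1), hab2 (j + 1), hab3 (j + 1)⟩
          ⟨hmem1, hmem2, hsum2⟩
      constructor
      · have h1 : (ab (j + 1)).1 = T ((ab j).1) + PQ.1 := by rw [huniq]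
        rw [h1, add_sub_cancel_left]; exact hPb'
      · have h2 : (ab (j + 1)).2 = T ((ab j).2) + PQ.2 := by rw [huniq]
        rw [h2, add_sub_cancel_left]; exact hQb'
    have hcδ : (0 : ℝ) ≤ c * δ := by positivity
    -- forward expansion: the M-component at time j0 is at most c*δ
    have hstepA : ∀ n : ℕ, 2 * ‖(ab (j0 + (n : ℤ))).1‖ - c * δ ≤
        ‖(ab (j0 + ((n + 1 : ℕ) : ℤ))).1‖ := by
      intro n
      rw [show ((n + 1 : ℕ) : ℤ) = (n : ℤ) + 1 by push_cast; ring, ← add_assoc]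
      have hmemM : (ab (j0 + (n : ℤ))).1 ∈ M :=
        hMmem (j0 + (n : ℤ) - j0) (by omega) _ (hab1 (j0 + (n : ℤ)))
      have hexp := hexpM _ hmemM
      have hr := (hrec (j0 + (n : ℤ))).1
      have htri := norm_sub_norm_le (T ((ab (j0 + (n : ℤ))).1)) ((ab (j0 + (n : ℤ) + 1)).1)
      rw [norm_sub_rev] at htri
      linarith
    have hAle : ‖(ab j0).1‖ ≤ c * δ := by
      have h := stmt12_growth (fun n : ℕ => ‖(ab (j0 + (n : ℤ))).1‖) (c * S) (c * δ) hcδ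
        (fun n => (habd (j0 + (n : ℤ))).1) hstepA
      simpa using h
    -- backward expansion: the N-component at time j0 is at most 2*c*δ
    have hstepB : ∀ n : ℕ, 2 * ‖(ab (j0 - (n : ℤ))).2‖ - 2 * (c * δ) ≤
        ‖(ab (j0 - ((n + 1 : ℕ) : ℤ))).2‖ := by
      intro n
      rw [show ((n + 1 : ℕ) : ℤ) = (n : ℤ) + 1 by push_cast; ring]
      have hr := (hrec (j0 - ((n : ℤ) + 1))).2
      rw [show j0 - ((n : ℤ) + 1) + 1 = j0 - (n : ℤ) by ring] at hr
      have hmemN : T ((ab (j0 - ((n : ℤ) + 1))).2) ∈ N := by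
        have h := himg_T (j0 - ((n : ℤ) + 1) - j0) N _ (hab2 (j0 - ((n : ℤ) + 1)))
        exact hNmem (j0 - ((n : ℤ) + 1) - j0 + 1) (by omega) _ h
      have hexp := hexpN _ hmemN
      rw [ContinuousLinearEquiv.symm_apply_apply] at hexp
      have htri := norm_sub_norm_le ((ab (j0 - (n : ℤ))).2) (T ((ab (j0 - ((n : ℤ) + 1))).2))
      linarith
    have hBle : ‖(ab j0).2‖ ≤ 2 * (c * δ) := by
      have h := stmt12_growth (fun n : ℕ => ‖(ab (j0 - (n : ℤ))).2‖) (c * S) (2 * (c * δ))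
        (by positivity) (fun n => (habd (j0 - (n : ℤ))).2) hstepB
      simpa using h
    -- conclusion
    have hx0 : ‖x j0‖ ≤ ‖(ab j0).1‖ + ‖(ab j0).2‖ := by
      rw [hab3 j0]; exact norm_add_le _ _
    have hval : c * δ = ε / 12 := by
      rw [hδdef]; field_simp
    rw [hval] at hAle hBle
    linarith
  refine ⟨main, fun ε hε => ⟨ε / (12 * c), by positivity, fun x hx hpp => ?_⟩⟩
  obtain ⟨p, hp0, hper⟩ := hpp
  refine ⟨0, p, hp0, hper, Function.iterate_fixed (by simp) p, fun j => ?_⟩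
  simpa using main ε hε x hx ⟨p, hp0, hper⟩ j
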